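/- For all odd integers a, b with 1 ≤ b and 5b ≤ a, and every real number r with 0 < r ≤ 2, one has (3 + 1/r)^b < (1 + 1/(2r))^(a+b). -/

import Mathlib

theorem stmt_1 (a b : ℕ) (ha : Odd a) (hb : Odd b) (hb1 : 1 ≤ b) (hab : 5*b ≤ a)
    (r : ℝ) (hr0 : 0 < r) (hr2 : r ≤ 2) :
    (3 + 1/r)^b < (1 + 1/(2*r))^(a+b) := by
  have hx : (1:ℝ)/4 ≤ 1/(2*r) := by
    rw [div_le_div_iff₀ (by norm_num) (by positivity)]; linarith
  set x : ℝ := 1/(2*r) with hxdef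
  have hxr : (1:ℝ)/r = 2*x := by rw [hxdef]; field_simp
  have key : 3 + 1/r < (1 + x)^6 := by
    rw [hxr]; nlinarith [sq_nonneg x, sq_nonneg (x - 1/4), pow_pos (show (0:ℝ) < 1 + x by linarith) 2, sq_nonneg ((1+x)^2), sq_nonneg (x^2), sq_nonneg (x^3)]
  have h1 : (1:ℝ) ≤ 1 + x := by linarith
  have hpos : (0:ℝ) ≤ 3 + 1/r := by positivity
  calc (3 + 1/r)^b < ((1+x)^6)^b := by
        exact pow_lt_pow_left₀ key hpos (by omega)
    _ = (1+x)^(6*b) := by rw [← pow_mul]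
    _ ≤ (1+x)^(a+b) := by
        apply pow_le_pow_right₀ h1; omega
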